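/- Di-Novikov algebras satisfy the Dong property: if A is a di-Novikov algebra over a field k of characteristic 0 with operations λ(x,y) = x ⊣ y and ρ(x,y) = x ⊢ y, and a, b, c are pairwise mutually F-local formal distributions over A for the family F = {λ, ρ}, then for every n ∈ ℕ and every μ, ν ∈ F both ordered pairs (a ∘_{μ,n} b, c) and (c, a ∘_{μ,n} b) are ν-local. -/

import Mathlib

/-- The ordered pair of formal distributions `(a, b)` over `A` is `μ`-local:
there is `N` with `(w - z)^N μ(a(w), b(z)) = 0`, encoded coefficient-wise. -/
def IsLocalPair {A : Type*} [AddCommGroup A] (μ : A → A → A) (a b : ℤ → A) : Prop :=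
  ∃ N : ℕ, ∀ m p : ℤ,
    ∑ s ∈ Finset.range (N + 1),
      ((-1 : ℤ) ^ s * (N.choose s : ℤ)) • μ (a (m + (N : ℤ) - (s : ℤ))) (b (p + (s : ℤ))) = 0

/-- The `n`-th `μ`-product `a ∘_{μ,n} b` of formal distributions,
encoding `Res_{ξ=0} (ξ - w)^n μ(a(ξ), b(w))`. -/
def NthProduct {A : Type*} [AddCommGroup A] (μ : A → A → A) (n : ℕ) (a b : ℤ → A) : ℤ → A :=
  fun m => ∑ j ∈ Finset.range (n + 1),
    ((-1 : ℤ) ^ j * (n.choose j : ℤ)) • μ (a ((n : ℤ) - (j : ℤ))) (b (m + (j : ℤ)))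

/-- Three formal distributions `a, b, c` are pairwise mutually `μ`-local. -/
def PairwiseMutuallyLocal {A : Type*} [AddCommGroup A] (μ : A → A → A) (a b c : ℤ → A) : Prop :=
  IsLocalPair μ a b ∧ IsLocalPair μ b a ∧ IsLocalPair μ a c ∧ IsLocalPair μ c a ∧
    IsLocalPair μ b c ∧ IsLocalPair μ c b

/-- `μ : A → A → A` is `k`-bilinear. -/
def IsBilinear (k : Type*) [Field k] {A : Type*} [AddCommGroup A] [Module k A]
    (μ : A → A → A) : Prop :=
  (∀ x y z : A, μ (x + y) z = μ x z + μ y z) ∧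
    (∀ x y z : A, μ x (y + z) = μ x y + μ x z) ∧
    (∀ (r : k) (x y : A), μ (r • x) y = r • μ x y) ∧
    (∀ (r : k) (x y : A), μ x (r • y) = r • μ x y)

namespace DongAux
open Finset

variable {A : Type*} [AddCommGroup A]

abbrev V (A : Type*) := ℤ → ℤ → ℤ → A

def e1 : AddMonoid.End (V A) := AddMonoidHom.mk' (fun F => fun i j k => F (i+1) j k) (fun _ _ => rfl)
def e2 : AddMonoid.End (V A) := AddMonoidHom.mk' (fun F => fun i j k => F i (j+1) k) (fun _ _ => rfl)
def e3 : AddMonoid.End (V A) := AddMonoidHom.mk' (fun F => fun i j k => F i j (k+1)) (fun _ _ => rfl)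

lemma end_mul_apply (f g : AddMonoid.End (V A)) (u : V A) : (f * g) u = f (g u) := rfl

lemma end_sum_apply {ι : Type*} (t : Finset ι) (f : ι → AddMonoid.End (V A)) (u : V A) :
    (∑ i ∈ t, f i) u = ∑ i ∈ t, f i u := by
  induction t using Finset.cons_induction with
  | empty => rfl
  | cons i t hi ih => rw [Finset.sum_cons, Finset.sum_cons, ← ih]; rfl

lemma comm12 : Commute (e1 : AddMonoid.End (V A)) e2 := AddMonoidHom.ext fun _ => rfl
lemma comm13 : Commute (e1 : AddMonoid.End (V A)) e3 := AddMonoidHom.ext fun _ => rfl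
lemma comm23 : Commute (e2 : AddMonoid.End (V A)) e3 := AddMonoidHom.ext fun _ => rfl

lemma e1_pow (m : ℕ) (F : V A) (i j k : ℤ) : (e1 ^ m) F i j k = F (i + m) j k := by
  induction m generalizing F i with
  | zero => simp
  | succ t ih =>
    rw [pow_succ, end_mul_apply, ih]
    show F (i + t + 1) j k = _
    congr 1; push_cast; ring

lemma e2_pow (m : ℕ) (F : V A) (i j k : ℤ) : (e2 ^ m) F i j k = F i (j + m) k := by
  induction m generalizing F j with
  | zero => simp
  | succ t ih =>
    rw [pow_succ, end_mul_apply, ih]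
    show F i (j + t + 1) k = _
    congr 1; push_cast; ring

lemma e3_pow (m : ℕ) (F : V A) (i j k : ℤ) : (e3 ^ m) F i j k = F i j (k + m) := by
  induction m generalizing F k with
  | zero => simp
  | succ t ih =>
    rw [pow_succ, end_mul_apply, ih]
    show F i j (k + t + 1) = _
    congr 1; push_cast; ring

lemma neg_pow_apply (Q : AddMonoid.End (V A)) (t : ℕ) (u : V A) :
    ((-Q) ^ t) u = ((-1 : ℤ) ^ t) • ((Q ^ t) u) := by
  induction t generalizing u with
  | zero => simp
  | succ s ih =>
    rw [pow_succ' (-Q) s, end_mul_apply]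
    have hneg : ∀ v : V A, (-Q) v = -(Q v) := fun _ => rfl
    rw [hneg, ih, pow_succ' Q s, end_mul_apply, map_zsmul, ← neg_smul]
    congr 1
    ring

lemma diff_pow_apply (P Q : AddMonoid.End (V A)) (h : Commute P Q) (N : ℕ) (F : V A) :
    ((P - Q) ^ N) F
      = ∑ s ∈ range (N+1), ((-1:ℤ)^s * (N.choose s : ℤ)) • ((P ^ (N - s)) ((Q ^ s) F)) := by
  rw [sub_eq_add_neg, (h.neg_right).add_pow N, end_sum_apply]
  rw [← Finset.sum_range_reflect]
  refine Finset.sum_congr rfl fun s hs => ?_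
  have hsN : s ≤ N := Finset.mem_range_succ_iff.mp hs
  simp only [Nat.add_sub_cancel]
  rw [end_mul_apply, end_mul_apply, AddMonoid.End.natCast_apply]
  rw [Nat.sub_sub_self hsN, Nat.choose_symm hsN, neg_pow_apply, map_zsmul, map_nsmul, map_nsmul,
    mul_smul, ← natCast_zsmul]


lemma L12 (N : ℕ) (F : V A) (i j k : ℤ) :
    ((e1 - e2 : AddMonoid.End (V A)) ^ N) F i j k
      = ∑ s ∈ range (N+1), ((-1:ℤ)^s * (N.choose s : ℤ)) • F (i + N - s) (j + s) k := by
  rw [diff_pow_apply _ _ comm12]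
  rw [Finset.sum_apply, Finset.sum_apply, Finset.sum_apply]
  refine Finset.sum_congr rfl fun s hs => ?_
  have hsN : s ≤ N := Finset.mem_range_succ_iff.mp hs
  simp only [Pi.smul_apply]
  rw [e1_pow, e2_pow]
  congr 2
  push_cast [Nat.cast_sub hsN]
  ring

lemma L13 (N : ℕ) (F : V A) (i j k : ℤ) :
    ((e1 - e3 : AddMonoid.End (V A)) ^ N) F i j k
      = ∑ s ∈ range (N+1), ((-1:ℤ)^s * (N.choose s : ℤ)) • F (i + N - s) j (k + s) := by
  rw [diff_pow_apply _ _ comm13]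
  rw [Finset.sum_apply, Finset.sum_apply, Finset.sum_apply]
  refine Finset.sum_congr rfl fun s hs => ?_
  have hsN : s ≤ N := Finset.mem_range_succ_iff.mp hs
  simp only [Pi.smul_apply]
  rw [e1_pow, e3_pow]
  congr 2
  push_cast [Nat.cast_sub hsN]
  ring

lemma L23 (N : ℕ) (F : V A) (i j k : ℤ) :
    ((e2 - e3 : AddMonoid.End (V A)) ^ N) F i j k
      = ∑ s ∈ range (N+1), ((-1:ℤ)^s * (N.choose s : ℤ)) • F i (j + N - s) (k + s) := by
  rw [diff_pow_apply _ _ comm23]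
  rw [Finset.sum_apply, Finset.sum_apply, Finset.sum_apply]
  refine Finset.sum_congr rfl fun s hs => ?_
  have hsN : s ≤ N := Finset.mem_range_succ_iff.mp hs
  simp only [Pi.smul_apply]
  rw [e2_pow, e3_pow]
  congr 2
  push_cast [Nat.cast_sub hsN]
  ring

lemma hom_sum (f : A →+ A) (N : ℕ) (z : ℕ → ℤ) (u : ℕ → A) :
    ∑ s ∈ range N, z s • f (u s) = f (∑ s ∈ range N, z s • u s) := by
  rw [map_sum]
  exact Finset.sum_congr rfl fun s _ => (map_zsmul f _ _).symm

lemma hom_sum_zero (f : A →+ A) {N : ℕ} {z : ℕ → ℤ} {u : ℕ → A}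
    (h : ∑ s ∈ range N, z s • u s = 0) : ∑ s ∈ range N, z s • f (u s) = 0 := by
  rw [hom_sum, h, map_zero]

lemma flip_sum {μ : A → A → A} {x y : ℤ → A} {N : ℕ}
    (h : ∀ m p : ℤ, ∑ s ∈ range (N+1),
      ((-1:ℤ)^s * (N.choose s : ℤ)) • μ (x (m + N - s)) (y (p + s)) = 0)
    (m p : ℤ) :
    ∑ s ∈ range (N+1), ((-1:ℤ)^s * (N.choose s : ℤ)) • μ (x (m + s)) (y (p + N - s)) = 0 := by
  rw [← Finset.sum_range_reflect]
  have step : ∀ s ∈ range (N+1),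
      ((-1:ℤ)^(N+1-1-s) * (N.choose (N+1-1-s) : ℤ)) •
          μ (x (m + (N+1-1-s : ℕ))) (y (p + N - (N+1-1-s : ℕ)))
        = ((-1:ℤ)^N * ((-1:ℤ)^s * (N.choose s : ℤ))) • μ (x (m + N - s)) (y (p + s)) := by
    intro s hs
    have hsN : s ≤ N := Finset.mem_range_succ_iff.mp hs
    simp only [Nat.add_sub_cancel]
    have h3 : ((-1:ℤ)^s) * ((-1:ℤ)^s) = 1 := by
      rw [← mul_pow]; norm_num
    have h1 : ((-1:ℤ)^(N-s)) = (-1:ℤ)^N * (-1:ℤ)^s := by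
      have h2 : ((-1:ℤ)^(N-s)) * ((-1:ℤ)^s) = (-1:ℤ)^N := by
        rw [← pow_add, Nat.sub_add_cancel hsN]
      rw [← h2, mul_assoc, h3, mul_one]
    rw [Nat.choose_symm hsN, h1, mul_assoc]
    congr 2
    · push_cast [Nat.cast_sub hsN]; ring
    · push_cast [Nat.cast_sub hsN]; ring
  rw [Finset.sum_congr rfl step]
  have hsplit : ∑ s ∈ range (N+1),
      ((-1:ℤ)^N * ((-1:ℤ)^s * (N.choose s : ℤ))) • μ (x (m + N - s)) (y (p + s))
      = (-1:ℤ)^N • ∑ s ∈ range (N+1),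
          ((-1:ℤ)^s * (N.choose s : ℤ)) • μ (x (m + N - s)) (y (p + s)) := by
    rw [Finset.smul_sum]
    exact Finset.sum_congr rfl fun s _ => mul_smul _ _ _
  rw [hsplit, h m p, smul_zero]

lemma mul_apply_kill (f g : AddMonoid.End (V A)) (u : V A) (h : g u = 0) : (f * g) u = 0 := by
  rw [end_mul_apply, h, map_zero]

lemma pow_pad (f : AddMonoid.End (V A)) {s t : ℕ} (hst : s ≤ t) (u : V A)
    (h0 : (f ^ s) u = 0) : (f ^ t) u = 0 := by
  rw [← Nat.sub_add_cancel hst, pow_add]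
  exact mul_apply_kill _ _ _ h0

lemma comm_left {R : Type*} [Monoid R] {a b : R} (h : Commute a b) (c : R) :
    a * (b * c) = b * (a * c) := by
  rw [← mul_assoc, h.eq, mul_assoc]

lemma opA (x y : AddMonoid.End (V A)) (h : Commute x y) (G : V A) (n Na Nc : ℕ)
    (h1 : (x ^ Na) G = 0) (h2 : ((x + y) ^ Nc) G = 0) :
    ((y ^ (Na + Nc)) * x ^ n) G = 0 := by
  have cxy : Commute (x + y) x := (Commute.refl x).add_left h.symm
  have key : (y : AddMonoid.End (V A)) ^ (Na + Nc)
      = ∑ i ∈ range (Na + Nc + 1),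
          (x + y) ^ i * (-x) ^ (Na + Nc - i) * ((Na+Nc).choose i : AddMonoid.End (V A)) := by
    have hy : (x + y) + (-x) = y := by abel
    conv_lhs => rw [← hy]
    rw [(cxy.neg_right).add_pow]
  rw [key, Finset.sum_mul, end_sum_apply]
  refine Finset.sum_eq_zero fun i hi => ?_
  rcases le_or_gt Nc i with hge | hlt
  · have e : (x + y) ^ i = (x + y) ^ (i - Nc) * (x + y) ^ Nc := by
      rw [← pow_add, Nat.sub_add_cancel hge]
    have c1 : Commute ((x+y)^Nc) ((-x) ^ (Na + Nc - i)) := (cxy.neg_right).pow_pow _ _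
    have c2 : Commute ((x+y)^Nc) (((Na+Nc).choose i : AddMonoid.End (V A))) :=
      (Nat.cast_commute _ _).symm
    have c3 : Commute ((x+y)^Nc) (x ^ n) := cxy.pow_pow _ _
    rw [e]
    simp only [mul_assoc]
    rw [comm_left c1, comm_left c2, c3.eq]
    exact mul_apply_kill _ _ _ (mul_apply_kill _ _ _ (mul_apply_kill _ _ _
      (mul_apply_kill _ _ _ h2)))
  · have hNa : Na ≤ Na + Nc - i := by omega
    have e2 : (-x) ^ (Na + Nc - i)
        = (-1 : AddMonoid.End (V A))^(Na+Nc-i) * (x ^ (Na+Nc-i-Na) * x ^ Na) := by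
      rw [← neg_one_mul x, (Commute.neg_one_left x).mul_pow, ← pow_add, Nat.sub_add_cancel hNa]
    have c2 : Commute (x^Na) (((Na+Nc).choose i : AddMonoid.End (V A))) :=
      (Nat.cast_commute _ _).symm
    have c3 : Commute (x^Na) (x ^ n) := (Commute.refl x).pow_pow _ _
    rw [e2]
    simp only [mul_assoc]
    rw [comm_left c2, c3.eq]
    exact mul_apply_kill _ _ _ (mul_apply_kill _ _ _ (mul_apply_kill _ _ _
      (mul_apply_kill _ _ _ (mul_apply_kill _ _ _ h1))))

lemma opB (x y : AddMonoid.End (V A)) (h : Commute x y) (H : V A) (n p q r : ℕ)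
    (h1 : (y ^ p) H = 0) (h2 : ((x ^ q) * (x + y) ^ r) H = 0) :
    (((x + y) ^ (p + q + r)) * y ^ n) H = 0 := by
  have h2' : (x ^ q) (((x + y) ^ r) H) = 0 := by rw [← end_mul_apply]; exact h2
  have key : ((x + y) : AddMonoid.End (V A)) ^ (p + q + r)
      = (∑ i ∈ range (p + q + 1),
          x ^ i * y ^ (p + q - i) * ((p+q).choose i : AddMonoid.End (V A))) * (x + y) ^ r := by
    rw [← h.add_pow, ← pow_add]
  rw [key, Finset.sum_mul, Finset.sum_mul, end_sum_apply]
  refine Finset.sum_eq_zero fun i hi => ?_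
  rcases le_or_gt q i with hge | hlt
  · have e : x ^ i = x ^ (i - q) * x ^ q := by rw [← pow_add, Nat.sub_add_cancel hge]
    have cA : Commute ((x+y)^r) (y^n) := (h.add_left (Commute.refl y)).pow_pow _ _
    have cB : Commute (x^q) (y ^ (p + q - i)) := h.pow_pow _ _
    have cC : Commute (x^q) (((p+q).choose i : AddMonoid.End (V A))) := (Nat.cast_commute _ _).symm
    have cD : Commute (x^q) (y ^ n) := h.pow_pow _ _
    rw [e]
    simp only [mul_assoc]
    rw [cA.eq, comm_left cB, comm_left cC, comm_left cD]
    exact mul_apply_kill _ _ _ (mul_apply_kill _ _ _ (mul_apply_kill _ _ _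
      (mul_apply_kill _ _ _ h2)))
  · have hp : p ≤ p + q - i := by omega
    have e : y ^ (p + q - i) = y ^ (p + q - i - p) * y ^ p := by
      rw [← pow_add, Nat.sub_add_cancel hp]
    have cC : Commute (y^p) (((p+q).choose i : AddMonoid.End (V A))) := (Nat.cast_commute _ _).symm
    have cR : Commute (y^p) ((x+y)^r) := ((h.add_left (Commute.refl y)).symm).pow_pow _ _
    have cN : Commute (y^p) (y^n) := (Commute.refl y).pow_pow _ _
    rw [e]
    simp only [mul_assoc]
    rw [comm_left cC, comm_left cR, cN.eq]
    exact mul_apply_kill _ _ _ (mul_apply_kill _ _ _ (mul_apply_kill _ _ _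
      (mul_apply_kill _ _ _ (mul_apply_kill _ _ _ h1))))

lemma caseA {ν μ α β : A → A → A}
    (hν : ∀ x y z : A, ν (x + y) z = ν x z + ν y z)
    (hα : ∀ x y z : A, α (x + y) z = α x z + α y z)
    (hid : ∀ x y z : A, ν (μ x y) z = α (β x z) y)
    {a b c : ℤ → A} (hab : IsLocalPair μ a b) (hac : IsLocalPair β a c) (n : ℕ) :
    IsLocalPair ν (NthProduct μ n a b) c := by
  obtain ⟨Na, hab⟩ := hab
  obtain ⟨Nc, hac⟩ := hac
  refine ⟨Na + Nc, fun m p => ?_⟩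
  have hcomm : Commute (e1 - e2 : AddMonoid.End (V A)) (e2 - e3) :=
    (comm12.sub_right comm13).sub_left ((Commute.refl e2).sub_right comm23)
  set G : V A := fun i j k => ν (μ (a i) (b j)) (c k) with hG
  have hGab : ((e1 - e2 : AddMonoid.End (V A)) ^ Na) G = 0 := by
    funext i j k
    rw [L12]
    exact hom_sum_zero (AddMonoidHom.mk' (fun w => ν w (c k)) (fun u v => hν u v (c k))) (hab i j)
  have hGac : (((e1 - e2) + (e2 - e3) : AddMonoid.End (V A)) ^ Nc) G = 0 := by
    rw [sub_add_sub_cancel]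
    funext i j k
    rw [L13]
    have hrw : ∀ s ∈ range (Nc+1),
        ((-1:ℤ)^s * (Nc.choose s : ℤ)) • G (i + Nc - s) j (k + s)
          = ((-1:ℤ)^s * (Nc.choose s : ℤ)) •
            (AddMonoidHom.mk' (fun w => α w (b j)) (fun u v => hα u v (b j)))
              (β (a (i + Nc - s)) (c (k + s))) := by
      intro s _
      congr 1
      exact hid _ _ _
    rw [Finset.sum_congr rfl hrw]
    exact hom_sum_zero _ (hac i k)
  have main := opA (e1 - e2) (e2 - e3) hcomm G n Na Nc hGab hGac
  have hprod : ∀ q w : ℤ, ν (NthProduct μ n a b q) (c w)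
      = (((e1 - e2 : AddMonoid.End (V A)) ^ n) G) 0 q w := by
    intro q w
    calc ν (NthProduct μ n a b q) (c w)
        = (AddMonoidHom.mk' (fun v => ν v (c w)) (fun u v' => hν u v' (c w)))
            (∑ j ∈ range (n+1), ((-1:ℤ)^j * (n.choose j : ℤ)) •
              μ (a ((n:ℤ) - (j:ℤ))) (b (q + (j:ℤ)))) := by simp only [NthProduct]; rfl
      _ = ∑ j ∈ range (n+1), ((-1:ℤ)^j * (n.choose j : ℤ)) •
            (AddMonoidHom.mk' (fun v => ν v (c w)) (fun u v' => hν u v' (c w)))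
              (μ (a ((n:ℤ) - (j:ℤ))) (b (q + (j:ℤ)))) := (hom_sum _ _ _ _).symm
      _ = ∑ j ∈ range (n+1), ((-1:ℤ)^j * (n.choose j : ℤ)) • G (0 + n - j) (q + j) w := by
          refine Finset.sum_congr rfl fun j _ => ?_
          rw [zero_add]
          rfl
      _ = (((e1 - e2 : AddMonoid.End (V A)) ^ n) G) 0 q w := (L12 n G 0 q w).symm
  calc ∑ s ∈ range (Na + Nc + 1), ((-1:ℤ)^s * ((Na+Nc).choose s : ℤ)) •
        ν (NthProduct μ n a b (m + (↑(Na+Nc):ℤ) - (s:ℤ))) (c (p + (s:ℤ)))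
      = ∑ s ∈ range (Na + Nc + 1), ((-1:ℤ)^s * ((Na+Nc).choose s : ℤ)) •
          (((e1 - e2 : AddMonoid.End (V A)) ^ n) G) 0 (m + (↑(Na+Nc):ℤ) - (s:ℤ)) (p + (s:ℤ)) := by
        exact Finset.sum_congr rfl fun s _ => by rw [hprod]
    _ = ((e2 - e3 : AddMonoid.End (V A)) ^ (Na+Nc))
          (((e1 - e2 : AddMonoid.End (V A)) ^ n) G) 0 m p :=
        (L23 (Na+Nc) _ 0 m p).symm
    _ = (((e2 - e3) ^ (Na+Nc) * (e1 - e2) ^ n : AddMonoid.End (V A))) G 0 m p := by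
        rw [end_mul_apply]
    _ = 0 := by rw [main]; rfl

set_option maxHeartbeats 1600000 in
lemma caseB {ν μ p1 p2 q1 q2 r1 r2 : A → A → A}
    (hν : ∀ x u v : A, ν x (u + v) = ν x u + ν x v)
    (hp1 : ∀ x y z : A, p1 (x + y) z = p1 x z + p1 y z)
    (hq1 : ∀ x y z : A, q1 (x + y) z = q1 x z + q1 y z)
    (hr1 : ∀ x u v : A, r1 x (u + v) = r1 x u + r1 x v)
    (hid : ∀ x y z : A, ν z (μ x y) = p1 (p2 z x) y - q1 (q2 x z) y + r1 x (r2 z y))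
    {a b c : ℤ → A} (hab : IsLocalPair μ a b) (hca : IsLocalPair p2 c a)
    (hac : IsLocalPair q2 a c) (hcb : IsLocalPair r2 c b) (n : ℕ) :
    IsLocalPair ν c (NthProduct μ n a b) := by
  obtain ⟨Nab, hab⟩ := hab
  obtain ⟨K1, hca⟩ := hca
  obtain ⟨K2, hac⟩ := hac
  obtain ⟨K3, hcb⟩ := hcb
  refine ⟨Nab + max K1 K2 + K3, fun m p => ?_⟩
  have hcomm : Commute (e1 - e2 : AddMonoid.End (V A)) (e2 - e3) :=
    (comm12.sub_right comm13).sub_left ((Commute.refl e2).sub_right comm23)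
  set H : V A := fun q i j => ν (c q) (μ (a i) (b j)) with hH
  set Ha1 : V A := fun q i j => p1 (p2 (c q) (a i)) (b j) with hHa1
  set Ha2 : V A := fun q i j => q1 (q2 (a i) (c q)) (b j) with hHa2
  set Hc : V A := fun q i j => r1 (a i) (r2 (c q) (b j)) with hHc
  have hsplit : H = (Ha1 - Ha2) + Hc := by
    funext q i j
    exact hid (a i) (b j) (c q)
  have hy : ((e2 - e3 : AddMonoid.End (V A)) ^ Nab) H = 0 := by
    funext q i j
    rw [L23]
    exact hom_sum_zero (AddMonoidHom.mk' (fun v => ν (c q) v) (fun u v => hν (c q) u v)) (hab i j)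
  have hxa1 : ((e1 - e2 : AddMonoid.End (V A)) ^ K1) Ha1 = 0 := by
    funext q i j
    rw [L12]
    exact hom_sum_zero (AddMonoidHom.mk' (fun w => p1 w (b j)) (fun u v => hp1 u v (b j))) (hca q i)
  have hxa2 : ((e1 - e2 : AddMonoid.End (V A)) ^ K2) Ha2 = 0 := by
    funext q i j
    rw [L12]
    exact hom_sum_zero (AddMonoidHom.mk' (fun w => q1 w (b j)) (fun u v => hq1 u v (b j)))
      (flip_sum hac i q)
  have hxa : ((e1 - e2 : AddMonoid.End (V A)) ^ (max K1 K2)) (Ha1 - Ha2) = 0 := by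
    rw [map_sub, pow_pad _ (le_max_left K1 K2) _ hxa1, pow_pad _ (le_max_right K1 K2) _ hxa2,
      sub_self]
  have hxyc : (((e1 - e2) + (e2 - e3) : AddMonoid.End (V A)) ^ K3) Hc = 0 := by
    rw [sub_add_sub_cancel]
    funext q i j
    rw [L13]
    exact hom_sum_zero (AddMonoidHom.mk' (fun w => r1 (a i) w) (fun u v => hr1 (a i) u v))
      (hcb q j)
  have hcombo : (((e1 - e2) ^ (max K1 K2)
      * ((e1 - e2) + (e2 - e3)) ^ K3 : AddMonoid.End (V A))) H = 0 := by
    have hcxy : Commute (e1 - e2 : AddMonoid.End (V A)) ((e1 - e2) + (e2 - e3)) :=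
      (Commute.refl _).add_right hcomm
    rw [(hcxy.pow_pow (max K1 K2) K3).eq, hsplit, end_mul_apply, map_add, map_add, hxa,
      map_zero, zero_add, ← end_mul_apply, ← (hcxy.pow_pow (max K1 K2) K3).eq, end_mul_apply,
      hxyc, map_zero]
  have main := opB (e1 - e2) (e2 - e3) hcomm H n Nab (max K1 K2) K3 hy hcombo
  have hprod : ∀ q w : ℤ, ν (c q) (NthProduct μ n a b w)
      = (((e2 - e3 : AddMonoid.End (V A)) ^ n) H) q 0 w := by
    intro q w
    calc ν (c q) (NthProduct μ n a b w)
        = (AddMonoidHom.mk' (fun v => ν (c q) v) (fun u v => hν (c q) u v))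
            (∑ j ∈ range (n+1), ((-1:ℤ)^j * (n.choose j : ℤ)) •
              μ (a ((n:ℤ) - (j:ℤ))) (b (w + (j:ℤ)))) := by simp only [NthProduct]; rfl
      _ = ∑ j ∈ range (n+1), ((-1:ℤ)^j * (n.choose j : ℤ)) •
            (AddMonoidHom.mk' (fun v => ν (c q) v) (fun u v => hν (c q) u v))
              (μ (a ((n:ℤ) - (j:ℤ))) (b (w + (j:ℤ)))) := (hom_sum _ _ _ _).symm
      _ = ∑ j ∈ range (n+1), ((-1:ℤ)^j * (n.choose j : ℤ)) • H q (0 + n - j) (w + j) := by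
          refine Finset.sum_congr rfl fun j _ => ?_
          rw [zero_add]
          rfl
      _ = (((e2 - e3 : AddMonoid.End (V A)) ^ n) H) q 0 w := (L23 n H q 0 w).symm
  calc ∑ s ∈ range (Nab + max K1 K2 + K3 + 1),
        ((-1:ℤ)^s * ((Nab + max K1 K2 + K3).choose s : ℤ)) •
        ν (c (m + (↑(Nab + max K1 K2 + K3):ℤ) - (s:ℤ))) (NthProduct μ n a b (p + (s:ℤ)))
      = ∑ s ∈ range (Nab + max K1 K2 + K3 + 1),
          ((-1:ℤ)^s * ((Nab + max K1 K2 + K3).choose s : ℤ)) •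
          (((e2 - e3 : AddMonoid.End (V A)) ^ n) H)
            (m + (↑(Nab + max K1 K2 + K3):ℤ) - (s:ℤ)) 0 (p + (s:ℤ)) :=
        Finset.sum_congr rfl fun s _ => by rw [hprod]
    _ = ((e1 - e3 : AddMonoid.End (V A)) ^ (Nab + max K1 K2 + K3))
          (((e2 - e3 : AddMonoid.End (V A)) ^ n) H) m 0 p :=
        (L13 (Nab + max K1 K2 + K3) _ m 0 p).symm
    _ = ((((e1 - e2) + (e2 - e3)) ^ (Nab + max K1 K2 + K3)
          * (e2 - e3) ^ n : AddMonoid.End (V A))) H m 0 p := by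
        rw [sub_add_sub_cancel, end_mul_apply]
    _ = 0 := by rw [main]; rfl

end DongAux

/-- Di-Novikov algebras satisfy the Dong property.
Here `l x y = x ⊣ y` and `r x y = x ⊢ y`. -/
theorem diNovikov_dong_property (k : Type*) [Field k] [CharZero k]
    (A : Type*) [AddCommGroup A] [Module k A]
    (l r : A → A → A) (hbill : IsBilinear k l) (hbilr : IsBilinear k r)
    (h1 : ∀ a b c : A, l (l a b) c = l (l a c) b)
    (h2 : ∀ a b c : A, r (l a b) c = l (r a c) b)
    (h3 : ∀ a b c : A, l (r a b) c = r (r a c) b)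
    (h4 : ∀ a b c : A, l (l a b) c - l (r b a) c = l a (l b c) - r b (l a c))
    (h5 : ∀ a b c : A, l (l a b) c - l (r b a) c = l a (r b c) - r b (l a c))
    (h6 : ∀ a b c : A, r (l a b) c - r (r b a) c = r a (r b c) - r b (r a c))
    (h7 : ∀ a b c : A, r (r a b) c - r (l b a) c = r a (r b c) - r b (r a c))
    (a b c : ℤ → A)
    (hloc : ∀ μ ∈ ({l, r} : Set (A → A → A)), PairwiseMutuallyLocal μ a b c)
    (n : ℕ) :
    ∀ μ ∈ ({l, r} : Set (A → A → A)), ∀ ν ∈ ({l, r} : Set (A → A → A)),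
      IsLocalPair ν (NthProduct μ n a b) c ∧ IsLocalPair ν c (NthProduct μ n a b) := by

  have hl := hloc l (Set.mem_insert _ _)
  have hr := hloc r (Set.mem_insert_of_mem _ rfl)
  obtain ⟨hab_l, hba_l, hac_l, hca_l, hbc_l, hcb_l⟩ := hl
  obtain ⟨hab_r, hba_r, hac_r, hca_r, hbc_r, hcb_r⟩ := hr
  have idll : ∀ x y z : A, l z (l x y) = l (l z x) y - l (r x z) y + r x (l z y) := by
    intro x y z
    rw [h4 z x y]
    abel
  have idlr : ∀ x y z : A, l z (r x y) = l (l z x) y - l (r x z) y + r x (l z y) := by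
    intro x y z
    rw [h5 z x y]
    abel
  have idrr : ∀ x y z : A, r z (r x y) = r (l z x) y - r (r x z) y + r x (r z y) := by
    intro x y z
    rw [h6 z x y]
    abel
  have idrl : ∀ x y z : A, r z (l x y) = l (r z x) y - l (l x z) y + l x (r z y) := by
    intro x y z
    have key : r z (l x y) = l x (r z y) - (l (l x z) y - l (r z x) y) := by
      rw [h5 x z y]
      abel
    rw [key]
    abel
  intro μ hμ ν hν
  simp only [Set.mem_insert_iff, Set.mem_singleton_iff] at hμ hν
  rcases hμ with rfl | rfl <;> rcases hν with rfl | rfl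
  · -- μ = l, ν = l
    exact ⟨DongAux.caseA hbill.1 hbill.1 h1 hab_l hac_l n,
      DongAux.caseB hbill.2.1 hbill.1 hbill.1 hbilr.2.1 idll hab_l hca_l hac_r hcb_l n⟩
  · -- μ = l, ν = r
    refine ⟨DongAux.caseA hbilr.1 hbill.1 h2 hab_l hac_r n, ?_⟩
    exact DongAux.caseB hbilr.2.1 hbill.1 hbill.1 hbill.2.1 idrl hab_l hca_r hac_l hcb_r n
  · -- μ = r, ν = l
    refine ⟨DongAux.caseA hbill.1 hbilr.1 h3 hab_r hac_r n, ?_⟩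
    exact DongAux.caseB hbill.2.1 hbill.1 hbill.1 hbilr.2.1 idlr hab_r hca_l hac_r hcb_l n
  · -- μ = r, ν = r
    refine ⟨DongAux.caseA hbilr.1 hbill.1 (fun x y z => (h3 x z y).symm) hab_r hac_r n, ?_⟩
    exact DongAux.caseB hbilr.2.1 hbilr.1 hbilr.1 hbilr.2.1 idrr hab_r hca_l hac_r hcb_r n
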